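/- Let G be a subgroup of the real orthogonal group O(n,ℝ) such that every element g ∈ G satisfies g² = 1. Then G is finite. -/

import Mathlib

open Matrix

/-- An ε-separated subset of a compact set in a metric space is finite. -/
lemma sep_finite {E : Type*} [MetricSpace E] {s K : Set E} (hK : IsCompact K)
    (hsub : s ⊆ K) {ε : ℝ} (hε : 0 < ε)
    (hsep : ∀ x ∈ s, ∀ y ∈ s, x ≠ y → ε ≤ dist x y) : s.Finite := by
  by_contra h
  have hinf : s.Infinite := h
  obtain ⟨x, -, hx⟩ := hinf.exists_accPt_of_subset_isCompact hK hsub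
  rw [accPt_iff_nhds] at hx
  obtain ⟨y₁, ⟨hy₁b, hy₁s⟩, hy₁x⟩ := hx (Metric.ball x (ε / 2)) (Metric.ball_mem_nhds _ (by linarith))
  have hy₁b' : dist y₁ x < ε / 2 := Metric.mem_ball.mp hy₁b
  have hd1 : 0 < dist x y₁ := dist_pos.mpr (Ne.symm hy₁x)
  obtain ⟨y₂, ⟨hy₂b, hy₂s⟩, hy₂x⟩ := hx (Metric.ball x (min (ε / 2) (dist x y₁)))
    (Metric.ball_mem_nhds _ (lt_min (by linarith) hd1))
  have hy₂b' : dist y₂ x < min (ε / 2) (dist x y₁) := Metric.mem_ball.mp hy₂b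
  have hy₂d : dist x y₂ < dist x y₁ := by
    rw [dist_comm]; exact lt_of_lt_of_le hy₂b' (min_le_right _ _)
  have hne : y₁ ≠ y₂ := fun hh => by simp [hh] at hy₂d
  have hs := hsep y₁ hy₁s y₂ hy₂s hne
  have h1 : dist x y₁ < ε / 2 := by rw [dist_comm]; exact hy₁b'
  have h2 : dist x y₂ < ε / 2 := by
    rw [dist_comm]; exact lt_of_lt_of_le hy₂b' (min_le_left _ _)
  have ht := dist_triangle y₁ x y₂
  rw [dist_comm y₁ x] at ht
  linarith

lemma orth_entry_abs_le {n : ℕ} (g : Matrix.orthogonalGroup (Fin n) ℝ) (i j : Fin n) :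
    |(g : Matrix (Fin n) (Fin n) ℝ) i j| ≤ 1 := by
  have h := g.prop.1
  have hentry := congrFun (congrFun h j) j
  rw [Matrix.mul_apply] at hentry
  simp only [Matrix.conjTranspose_apply, star_trivial, Matrix.one_apply_eq] at hentry
  rw [abs_le_one_iff_mul_self_le_one]
  calc (g : Matrix (Fin n) (Fin n) ℝ) i j * (g : Matrix (Fin n) (Fin n) ℝ) i j
      ≤ ∑ k, (g : Matrix (Fin n) (Fin n) ℝ) k j * (g : Matrix (Fin n) (Fin n) ℝ) k j :=
        Finset.single_le_sum
          (f := fun k => (g : Matrix (Fin n) (Fin n) ℝ) k j * (g : Matrix (Fin n) (Fin n) ℝ) k j)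
          (fun k _ => mul_self_nonneg _) (Finset.mem_univ i)
    _ = 1 := hentry

/-- A subgroup of the real orthogonal group `O(n, ℝ)` all of whose elements square to the
identity is finite. -/
theorem subgroup_orthogonal_involutions_finite (n : ℕ)
    (G : Subgroup (Matrix.orthogonalGroup (Fin n) ℝ))
    (hG : ∀ g ∈ G, g ^ 2 = 1) :
    (G : Set (Matrix.orthogonalGroup (Fin n) ℝ)).Finite := by
  set M := Matrix.orthogonalGroup (Fin n) ℝ
  set f : M → (Fin n → Fin n → ℝ) := fun g i j => (g : Matrix (Fin n) (Fin n) ℝ) i j with hf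
  have hinj : Function.Injective f := by
    intro g h hgh
    apply Subtype.ext
    ext i j
    exact congrFun (congrFun hgh i) j
  have hsq : ∀ g ∈ G, (g : Matrix (Fin n) (Fin n) ℝ) * (g : Matrix (Fin n) (Fin n) ℝ) = 1 := by
    intro g hg
    have := congrArg (Subtype.val) (hG g hg)
    rw [pow_two] at this
    exact this
  -- separation
  have hsep : ∀ x ∈ f '' (G : Set M), ∀ y ∈ f '' (G : Set M), x ≠ y →
      (1 : ℝ) / ((n : ℝ) * n + 1) ≤ dist x y := by
    rintro x ⟨g, hg, rfl⟩ y ⟨h, hh, rfl⟩ hxy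
    set a : Matrix (Fin n) (Fin n) ℝ := (g : Matrix (Fin n) (Fin n) ℝ) with ha
    set b : Matrix (Fin n) (Fin n) ℝ := (h : Matrix (Fin n) (Fin n) ℝ) with hb
    have ha2 : a * a = 1 := hsq g hg
    have hab2 : (a * b) * (a * b) = 1 := hsq (g * h) (mul_mem hg hh)
    set k : Matrix (Fin n) (Fin n) ℝ := a * b with hk
    have hkne : k ≠ 1 := by
      intro h1
      apply hxy
      have hba : b = a := by
        have h2 : a * (a * b) = a * 1 := by rw [← hk, h1]
        rwa [← mul_assoc, ha2, one_mul, mul_one] at h2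
      have : g = h := Subtype.ext (hba.symm)
      rw [this]
    -- find v with k.mulVec v ≠ v
    have hexv : ∃ v : Fin n → ℝ, k.mulVec v ≠ v := by
      by_contra hc
      push_neg at hc
      apply hkne
      ext i j
      have h3 := congrFun (hc (Pi.single j 1)) i
      rw [Matrix.mulVec_single] at h3
      simp only [Pi.smul_apply, Matrix.col_apply, op_smul_eq_mul, mul_one] at h3
      rw [h3, Matrix.one_apply, Pi.single_apply]
    obtain ⟨v, hv⟩ := hexv
    set w : Fin n → ℝ := v - k.mulVec v with hwdef
    have hw : w ≠ 0 := sub_ne_zero.mpr (Ne.symm hv)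
    have hkw : k.mulVec w = -w := by
      rw [hwdef, Matrix.mulVec_sub, Matrix.mulVec_mulVec, hab2, Matrix.one_mulVec]
      abel
    set u : Fin n → ℝ := a.mulVec w with hu
    have hbw : b.mulVec w = -u := by
      have hba : b = a * k := by rw [hk, ← mul_assoc, ha2, one_mul]
      rw [hba, ← Matrix.mulVec_mulVec, hkw, Matrix.mulVec_neg, hu]
    have hwau : w = a.mulVec u := by
      rw [hu, Matrix.mulVec_mulVec, ha2, Matrix.one_mulVec]
    have hune : u ≠ 0 := by
      intro h0
      apply hw
      rw [hwau, h0, Matrix.mulVec_zero]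
    obtain ⟨j₀, hj₀⟩ := Function.ne_iff.mp hune
    simp only [Pi.zero_apply] at hj₀
    obtain ⟨i, -, hmax⟩ := Finset.exists_max_image Finset.univ (fun j => |u j|)
      ⟨j₀, Finset.mem_univ j₀⟩
    have hui : 0 < |u i| := lt_of_lt_of_le (abs_pos.mpr hj₀) (hmax j₀ (Finset.mem_univ j₀))
    have hwbound : ∀ j, |w j| ≤ (n : ℝ) * |u i| := by
      intro j
      rw [hwau]
      calc |(a.mulVec u) j| = |∑ l, a j l * u l| := by rw [Matrix.mulVec, dotProduct]
        _ ≤ ∑ l, |a j l * u l| := Finset.abs_sum_le_sum_abs _ _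
        _ ≤ ∑ _l : Fin n, |u i| := by
            apply Finset.sum_le_sum
            intro l _
            rw [abs_mul]
            calc |a j l| * |u l| ≤ 1 * |u i| := by
                  exact mul_le_mul (orth_entry_abs_le g j l) (hmax l (Finset.mem_univ l))
                    (abs_nonneg _) zero_le_one
              _ = |u i| := one_mul _
        _ = (n : ℝ) * |u i| := by
            simp [Finset.sum_const, Finset.card_univ, nsmul_eq_mul]
    set d : ℝ := dist (f g) (f h) with hd
    have hdent : ∀ p q, |a p q - b p q| ≤ d := by
      intro p q
      have h1 : dist (f g p q) (f h p q) ≤ dist (f g p) (f h p) := dist_le_pi_dist _ _ q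
      have h2 : dist (f g p) (f h p) ≤ d := dist_le_pi_dist (f g) (f h) p
      have h3 : dist (f g p q) (f h p q) = |a p q - b p q| := Real.dist_eq _ _
      linarith
    have habw : ∑ l, (a i l - b i l) * w l = u i + u i := by
      have h4 : ∑ l, (a i l - b i l) * w l = a.mulVec w i - b.mulVec w i := by
        rw [Matrix.mulVec, Matrix.mulVec, dotProduct, dotProduct,
          ← Finset.sum_sub_distrib]
        congr 1
        ext l
        ring
      rw [h4, hbw, ← hu]
      simp
    have hkey : 2 * |u i| ≤ (n : ℝ) * ((n : ℝ) * |u i|) * d := by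
      have h1 : |u i + u i| ≤ ∑ _l : Fin n, d * ((n : ℝ) * |u i|) := by
        rw [← habw]
        calc |∑ l, (a i l - b i l) * w l| ≤ ∑ l, |(a i l - b i l) * w l| :=
            Finset.abs_sum_le_sum_abs _ _
          _ ≤ ∑ _l : Fin n, d * ((n : ℝ) * |u i|) := by
              apply Finset.sum_le_sum
              intro l _
              rw [abs_mul]
              exact mul_le_mul (hdent i l) (hwbound l) (abs_nonneg _)
                (le_trans (abs_nonneg _) (hdent i l))
      have h2 : |u i + u i| = 2 * |u i| := by
        rw [← two_mul, abs_mul]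
        simp
      rw [h2] at h1
      calc 2 * |u i| ≤ ∑ _l : Fin n, d * ((n : ℝ) * |u i|) := h1
        _ = (n : ℝ) * (d * ((n : ℝ) * |u i|)) := by
            simp [Finset.sum_const, Finset.card_univ, nsmul_eq_mul]
        _ = (n : ℝ) * ((n : ℝ) * |u i|) * d := by ring
    have hn1 : (1 : ℝ) ≤ (n : ℝ) := by
      have := i.pos
      exact_mod_cast this
    have hdnn : 0 ≤ d := dist_nonneg
    rw [hd] at hkey ⊢
    rw [div_le_iff₀ (by nlinarith)]
    nlinarith [hkey, hui, hn1, hdnn]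
  -- boundedness
  have hsub : f '' (G : Set M) ⊆ Metric.closedBall 0 1 := by
    rintro x ⟨g, -, rfl⟩
    rw [Metric.mem_closedBall]
    rw [show dist (f g) 0 = dist (f g) (fun _ _ => (0:ℝ)) from rfl]
    rw [dist_pi_le_iff zero_le_one]
    intro p
    rw [dist_pi_le_iff zero_le_one]
    intro q
    rw [Real.dist_eq, sub_zero]
    exact orth_entry_abs_le g p q
  have hfin : (f '' (G : Set M)).Finite :=
    sep_finite (isCompact_closedBall _ _) hsub (by positivity) hsep
  exact Set.Finite.of_finite_image hfin (Function.Injective.injOn hinj)
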